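/- Let G be a torsion-free group in which the centralizer of every nontrivial element is an infinite cyclic malnormal subgroup. If x, y, z ∈ G satisfy yˡ = z xᵏ z⁻¹ for some nonzero integers k, l, then y ∈ z C_G(x) z⁻¹. -/

import Mathlib

/-- A subgroup `H` of `G` is malnormal if `gHg⁻¹ ∩ H = {1}` for all `g ∉ H`. -/
def Malnormal {G : Type*} [Group G] (H : Subgroup G) : Prop :=
  ∀ g : G, g ∉ H → ∀ x ∈ H, g * x * g⁻¹ ∈ H → x = 1

/-- A predicate on a monoid saying that there is no non-trivial torsion element. -/
def Monoid.IsTorsionFree (G : Type*) [Monoid G] : Prop :=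
  ∀ g : G, g ≠ 1 → ¬IsOfFinOrder g

theorem conj_into_centralizer_of_commensurable {G : Type*} [Group G]
    (htf : Monoid.IsTorsionFree G)
    (hcent : ∀ c : G, c ≠ 1 →
      (∃ d : G, Subgroup.centralizer {c} = Subgroup.zpowers d) ∧
      (Subgroup.centralizer {c} : Set G).Infinite ∧
      Malnormal (Subgroup.centralizer {c}))
    (x y z : G) (k l : ℤ) (hk : k ≠ 0) (hl : l ≠ 0)
    (h : y ^ l = z * x ^ k * z⁻¹) :
    ∃ c ∈ Subgroup.centralizer {x}, y = z * c * z⁻¹ := by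
  by_cases hx : x = 1
  · subst hx
    have hyl : y ^ l = 1 := by simpa using h
    have hy : y = 1 := by
      by_contra hy
      exact htf y hy (isOfFinOrder_iff_zpow_eq_one.mpr ⟨l, hl, hyl⟩)
    exact ⟨1, Subgroup.one_mem _, by simp [hy]⟩
  · set w := z⁻¹ * y * z with hw
    have hwl : w ^ l = x ^ k := by
      have h2 : (z⁻¹ * y * (z⁻¹)⁻¹) ^ l = z⁻¹ * y ^ l * (z⁻¹)⁻¹ := conj_zpow (i := l) (a := z⁻¹) (b := y)
      rw [hw]
      simp only [inv_inv] at h2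
      rw [h2, h]; group
    have hxk : x ^ k ≠ 1 := by
      intro h1
      exact htf x hx (isOfFinOrder_iff_zpow_eq_one.mpr ⟨k, hk, h1⟩)
    obtain ⟨⟨d, hd⟩, -, -⟩ := hcent (x ^ k) hxk
    have hxmem : x ∈ Subgroup.centralizer {x ^ k} := by
      rw [Subgroup.mem_centralizer_iff]
      rintro s ⟨rfl⟩
      exact (Commute.self_zpow x k).symm
    have hwmem : w ∈ Subgroup.centralizer {x ^ k} := by
      rw [Subgroup.mem_centralizer_iff]
      rintro s ⟨rfl⟩
      rw [← hwl]
      exact (Commute.self_zpow w l).symm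
    rw [hd, Subgroup.mem_zpowers_iff] at hxmem hwmem
    obtain ⟨m, hm⟩ := hxmem
    obtain ⟨n, hn⟩ := hwmem
    have hcomm : Commute x w := by
      rw [← hm, ← hn]; exact Commute.zpow_zpow_self d m n
    refine ⟨w, ?_, by rw [hw]; group⟩
    rw [Subgroup.mem_centralizer_iff]
    rintro s ⟨rfl⟩
    exact hcomm
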